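/- Let k be a field, V a k-vector space of finite dimension n, Q : V → k a quadratic form, and (b i)_{i ∈ Fin n} an orthogonal basis of V for Q, with associated element d := ι(b 0)·ι(b 1)⋯ι(b (n−1)) ∈ CliffordAlgebra Q. Then d·d = ((−1)^(n(n−1)/2) · ∏_{i ∈ Fin n} Q(b i)) · 1 in CliffordAlgebra Q (note that ∏_i Q(b i) is the determinant of the Gram matrix of Q in the orthogonal basis b). -/

import Mathlib

open CliffordAlgebra

private lemma clifford_prod_comm_ι
    {k : Type*} [Field k] {V : Type*} [AddCommGroup V] [Module k V]
    (Q : QuadraticForm k V) (v : V) :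
    ∀ (t : List V), (∀ w ∈ t, QuadraticMap.polar Q w v = 0) →
      (t.map (ι Q)).prod * ι Q v =
        algebraMap k (CliffordAlgebra Q) ((-1 : k) ^ t.length) *
          (ι Q v * (t.map (ι Q)).prod)
  | [], _ => by simp
  | a :: s, h => by
    have hs := clifford_prod_comm_ι Q v s (fun w hw => h w (List.mem_cons_of_mem _ hw))
    have ha : ι Q a * ι Q v + ι Q v * ι Q a =
        algebraMap k _ (QuadraticMap.polar Q a v) := ι_mul_ι_add_swap a v
    rw [h a List.mem_cons_self, map_zero] at ha
    have ha' : ι Q a * ι Q v = - (ι Q v * ι Q a) := eq_neg_of_add_eq_zero_left ha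
    set S := (s.map (ι Q)).prod with hS
    set c := algebraMap k (CliffordAlgebra Q) ((-1 : k) ^ s.length) with hc
    simp only [List.map_cons, List.prod_cons, List.length_cons]
    calc (ι Q a * S) * ι Q v = ι Q a * (S * ι Q v) := mul_assoc _ _ _
      _ = ι Q a * (c * (ι Q v * S)) := by rw [hs]
      _ = c * (ι Q a * (ι Q v * S)) := by
          rw [← mul_assoc, ← Algebra.commutes, mul_assoc]
      _ = c * ((ι Q a * ι Q v) * S) := by rw [mul_assoc]
      _ = - (c * (ι Q v * (ι Q a * S))) := by
          rw [ha']; simp [mul_assoc]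
      _ = algebraMap k (CliffordAlgebra Q) ((-1 : k) ^ (s.length + 1)) *
            (ι Q v * (ι Q a * S)) := by
          rw [pow_succ, map_mul, map_neg, map_one, hc]; ring_nf
          simp [neg_mul]

private lemma clifford_prod_sq
    {k : Type*} [Field k] {V : Type*} [AddCommGroup V] [Module k V]
    (Q : QuadraticForm k V) :
    ∀ (t : List V), t.Pairwise (fun a b => QuadraticMap.polar Q a b = 0) →
      (t.map (ι Q)).prod * (t.map (ι Q)).prod =
        algebraMap k (CliffordAlgebra Q)
          ((-1 : k) ^ (t.length * (t.length - 1) / 2) * (t.map Q).prod)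
  | [], _ => by simp
  | v :: s, h => by
    rw [List.pairwise_cons] at h
    have hs := clifford_prod_sq Q s h.2
    have hsym : ∀ w ∈ s, QuadraticMap.polar Q w v = 0 := fun w hw => by
      rw [QuadraticMap.polar_comm]; exact h.1 w hw
    have hcm := clifford_prod_comm_ι Q v s hsym
    set S := (s.map (ι Q)).prod with hS
    set c := algebraMap k (CliffordAlgebra Q) ((-1 : k) ^ s.length) with hc
    simp only [List.map_cons, List.prod_cons, List.length_cons]
    calc (ι Q v * S) * (ι Q v * S)
        = ι Q v * ((S * ι Q v) * S) := by rw [mul_assoc]; rw [mul_assoc]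
      _ = ι Q v * ((c * (ι Q v * S)) * S) := by rw [hcm]
      _ = c * ((ι Q v * ι Q v) * (S * S)) := by
          rw [← mul_assoc, ← mul_assoc, ← Algebra.commutes, mul_assoc, mul_assoc,
            mul_assoc, mul_assoc]
      _ = algebraMap k (CliffordAlgebra Q)
            ((-1 : k) ^ s.length * (Q v * ((-1 : k) ^ (s.length * (s.length - 1) / 2) *
              (s.map Q).prod))) := by
          rw [ι_sq_scalar, hs, hc, ← map_mul, ← map_mul]
      _ = algebraMap k (CliffordAlgebra Q)
            ((-1 : k) ^ ((s.length + 1) * ((s.length + 1) - 1) / 2) *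
              (Q v * (s.map Q).prod)) := by
          congr 1
          have harith : (s.length + 1) * ((s.length + 1) - 1) / 2 =
              s.length + s.length * (s.length - 1) / 2 := by
            set m := s.length
            obtain ⟨cc, hc2⟩ : 2 ∣ m * (m - 1) := (Nat.even_mul_pred_self m).two_dvd
            have key2 : (m + 1) * ((m + 1) - 1) = m * (m - 1) + 2 * m := by
              cases m with
              | zero => simp
              | succ p => simp only [Nat.succ_sub_one]; ring
            omega
          rw [harith, pow_add]; ring

/-- If `b` is an orthogonal basis for `Q` and `d = ι(b 0) ⋯ ι(b (n-1))`, then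
`d * d = (-1)^(n(n-1)/2) * ∏ i, Q (b i)`, the scalar being (up to sign) the determinant of
the Gram matrix of `Q` in the basis `b`. -/
theorem clifford_d_sq
    (k : Type*) [Field k]
    (V : Type*) [AddCommGroup V] [Module k V]
    (n : ℕ) (Q : QuadraticForm k V) (b : Module.Basis (Fin n) k V)
    (horth : ∀ i j : Fin n, i ≠ j → QuadraticMap.polar Q (b i) (b j) = 0)
    (d : CliffordAlgebra Q) (hd : d = (List.ofFn fun i : Fin n => ι Q (b i)).prod) :
    d * d = algebraMap k (CliffordAlgebra Q)
      ((-1 : k) ^ (n * (n - 1) / 2) * ∏ i : Fin n, Q (b i)) := by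
  have hmap : (List.ofFn fun i : Fin n => ι Q (b i)) = (List.ofFn b).map (ι Q) := by
    rw [List.map_ofFn]; rfl
  have hpw : (List.ofFn b).Pairwise (fun a c => QuadraticMap.polar Q a c = 0) := by
    rw [List.pairwise_ofFn]
    intro i j hij
    exact horth i j (ne_of_lt hij)
  have := clifford_prod_sq Q (List.ofFn b) hpw
  rw [hd, hmap, this, List.length_ofFn, List.map_ofFn, List.prod_ofFn]
  rfl
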